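/- In the Schachermayer example with claims H_1 = 1, H_2 = (1/U + 1) V^+ and weights ω_1 = 1, ω_2 = V^+: the strategy ξ*_1 = 1 - c, ξ*_2 = 1/U^2 satisfies ξ*_1 ΔS_1 ∈ L^2(P), ξ*_2 ΔS_2 is F_1-conditionally square integrable (E[(ξ*_2 ΔS_2)^2 | F_1] < ∞ a.s.), but E[(ξ*_2 ΔS_2)^2] = ∞, i.e., ξ*_2 ΔS_2 is locally square integrable but not square integrable. -/

import Mathlib

open MeasureTheory ProbabilityTheory

/-- The σ-algebra generated by `U = Prod.fst` on `Ω = ℝ × ℝ`. -/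
def sigmaU : MeasurableSpace (ℝ × ℝ) :=
  MeasurableSpace.comap (Prod.fst : ℝ × ℝ → ℝ) inferInstance

set_option maxHeartbeats 2000000 in
/-- Schachermayer's example: with `ΔS₁ = 1`, `ΔS₂ = V⁺(1 + U) - 1`, claims `H₁ = 1`,
`H₂ = (1/U + 1) V⁺`, weights `ω₁ = 1`, `ω₂ = V⁺`, and strategy `ξ*₁ = 1 - c`,
`ξ*₂ = 1/U²`: one has `ξ*₁ ΔS₁ ∈ L²(P)`, `ξ*₂ ΔS₂` is `F₁ = σ(U)`-conditionally square
integrable (its conditional second moment is a.s. finite), but `E[(ξ*₂ ΔS₂)²] = ∞`,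
i.e. `ξ*₂ ΔS₂` is locally square integrable but not square integrable. -/
theorem stmt_13 (μ : Measure (ℝ × ℝ)) [IsProbabilityMeasure μ]
    (hU : μ.map Prod.fst = volume.restrict (Set.Icc (0 : ℝ) 1))
    (hV : ∀ᵐ x ∂μ, x.2 = 1 ∨ x.2 = -1)
    (hcond : μ[(fun x : ℝ × ℝ => if x.2 = 1 then (1 : ℝ) else 0) | sigmaU]
      =ᵐ[μ] fun x => x.1 ^ 2)
    (ΔS2 : ℝ × ℝ → ℝ) (hΔS2 : ∀ x, ΔS2 x = max x.2 0 * (1 + x.1) - 1)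
    (c : ℝ) :
    MemLp (fun _ : ℝ × ℝ => (1 - c) * (1 : ℝ)) 2 μ ∧
    (∀ᵐ x ∂μ, ∫⁻ y, ENNReal.ofReal ((1 / y.1 ^ 2 * ΔS2 y) ^ 2)
        ∂(condExpKernel μ sigmaU x) < ⊤) ∧
    (∫⁻ x, ENNReal.ofReal ((1 / x.1 ^ 2 * ΔS2 x) ^ 2) ∂μ = ⊤) ∧
    ¬ MemLp (fun x => 1 / x.1 ^ 2 * ΔS2 x) 2 μ := by
  have hm : sigmaU ≤ (inferInstance : MeasurableSpace (ℝ × ℝ)) := measurable_fst.comap_le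
  -- a.e. facts about the first coordinate
  have hIcc : ∀ᵐ x ∂μ, x.1 ∈ Set.Icc (0:ℝ) 1 := by
    rw [MeasureTheory.ae_iff]
    have : {x : ℝ × ℝ | ¬ x.1 ∈ Set.Icc (0:ℝ) 1} = Prod.fst ⁻¹' (Set.Icc (0:ℝ) 1)ᶜ := rfl
    rw [this, ← Measure.map_apply measurable_fst measurableSet_Icc.compl, hU,
      Measure.restrict_apply measurableSet_Icc.compl]
    simp
  have hne : ∀ᵐ x ∂μ, x.1 ≠ 0 := by
    rw [MeasureTheory.ae_iff]
    have : {x : ℝ × ℝ | ¬ x.1 ≠ 0} = Prod.fst ⁻¹' {(0:ℝ)} := by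
      ext x; simp
    rw [this, ← Measure.map_apply measurable_fst (measurableSet_singleton 0), hU,
      Measure.restrict_apply (measurableSet_singleton 0)]
    refine le_antisymm (le_trans (measure_mono Set.inter_subset_left) ?_) (by simp)
    simp
  -- measurability of the squared gain
  have hΔS2' : ΔS2 = fun x => max x.2 0 * (1 + x.1) - 1 := funext hΔS2
  have hfm : Measurable (fun x : ℝ × ℝ => (1 / x.1 ^ 2 * ΔS2 x) ^ 2) := by
    rw [hΔS2']
    exact ((measurable_const.div (measurable_fst.pow_const 2)).mul
      (((measurable_snd.max measurable_const).mul (measurable_const.add measurable_fst)).sub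
        measurable_const)).pow_const 2
  -- a.e. form of the squared gain
  have hfe : ∀ᵐ y ∂μ, (1 / y.1 ^ 2 * ΔS2 y) ^ 2
      = if y.2 = 1 then 1 / y.1 ^ 2 else 1 / y.1 ^ 4 := by
    filter_upwards [hV] with y hy
    rcases hy with hy | hy
    · rw [if_pos hy, hΔS2 y, hy]
      rcases eq_or_ne y.1 0 with h | h
      · simp [h]
      · have : max (1:ℝ) 0 * (1 + y.1) - 1 = y.1 := by norm_num
        rw [this]; field_simp
    · rw [hΔS2 y, hy, if_neg (by norm_num)]
      have : max (-1:ℝ) 0 * (1 + y.1) - 1 = -1 := by simp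
      rw [this]
      rcases eq_or_ne y.1 0 with h | h
      · simp [h]
      · field_simp
  -- the measurable set {x | x.2 = 1} and its indicator
  have hTm : MeasurableSet {x : ℝ × ℝ | x.2 = 1} := measurable_snd (measurableSet_singleton 1)
  have hιm : Measurable (fun x : ℝ × ℝ => if x.2 = 1 then (1:ℝ) else 0) :=
    Measurable.ite hTm measurable_const measurable_const
  have hιint : Integrable (fun x : ℝ × ℝ => if x.2 = 1 then (1:ℝ) else 0) μ := by
    refine ⟨hιm.aestronglyMeasurable, HasFiniteIntegral.of_bounded (C := 1) ?_⟩
    filter_upwards with x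
    rcases eq_or_ne x.2 1 with h | h <;> simp [h]
  ---- PART 3 : infinite second moment
  have key3 : ∀ t : ℝ, 0 < t → t ≤ 1 →
      ENNReal.ofReal (1 / t ^ 4 * (t - t ^ 3 / 3))
        ≤ ∫⁻ x, ENNReal.ofReal ((1 / x.1 ^ 2 * ΔS2 x) ^ 2) ∂μ := by
    intro t ht ht1
    set S : Set (ℝ × ℝ) := Prod.fst ⁻¹' Set.Ioc 0 t with hSdef
    set T : Set (ℝ × ℝ) := {x : ℝ × ℝ | x.2 = 1} with hTdef
    have hSm : MeasurableSet S := measurable_fst measurableSet_Ioc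
    have hSsub : Set.Ioc (0:ℝ) t ⊆ Set.Icc (0:ℝ) 1 :=
      Set.Ioc_subset_Icc_self.trans (Set.Icc_subset_Icc le_rfl ht1)
    have hμS : μ S = ENNReal.ofReal t := by
      rw [hSdef, ← Measure.map_apply measurable_fst measurableSet_Ioc, hU,
        Measure.restrict_apply measurableSet_Ioc, Set.inter_eq_left.2 hSsub,
        Real.volume_Ioc]
      simp
    have hμST : μ (S ∩ T) = ENNReal.ofReal (t ^ 3 / 3) := by
      have hSmU : MeasurableSet[sigmaU] S := ⟨Set.Ioc 0 t, measurableSet_Ioc, rfl⟩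
      haveI : IsFiniteMeasure (μ.trim hm) := isFiniteMeasure_trim hm
      have h2 : ∫ x in S, (if x.2 = 1 then (1:ℝ) else 0) ∂μ = ∫ x in S, x.1 ^ 2 ∂μ := by
        rw [← setIntegral_condExp hm hιint hSmU]
        exact setIntegral_congr_ae hSm (hcond.mono fun x hx _ => hx)
      have h1 : ∫ x in S, (if x.2 = 1 then (1:ℝ) else 0) ∂μ = (μ (S ∩ T)).toReal := by
        have : (fun x : ℝ × ℝ => if x.2 = 1 then (1:ℝ) else 0)
            = T.indicator (fun _ => (1:ℝ)) := by
          ext x; by_cases h : x.2 = 1 <;> simp [hTdef, Set.indicator_apply, Set.mem_setOf_eq, h]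
        rw [this, setIntegral_indicator hTm, setIntegral_const, smul_eq_mul, mul_one]; rfl
      have h3 : ∫ x in S, (x.1:ℝ) ^ 2 ∂μ = t ^ 3 / 3 := by
        have := setIntegral_map (μ := μ) (g := (Prod.fst : ℝ × ℝ → ℝ))
          (f := fun u : ℝ => u ^ 2) measurableSet_Ioc
          (by rw [hU]; exact (measurable_id.pow_const 2).aestronglyMeasurable)
          measurable_fst.aemeasurable (s := Set.Ioc 0 t)
        rw [hU] at this
        rw [hSdef, ← this, Measure.restrict_restrict measurableSet_Ioc,
          Set.inter_eq_left.2 hSsub, ← intervalIntegral.integral_of_le ht.le,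
          integral_pow]
        norm_num
      have h4 : (μ (S ∩ T)).toReal = t ^ 3 / 3 := by rw [← h1, h2, h3]
      rw [← h4, ENNReal.ofReal_toReal (measure_ne_top μ _)]
    have hμdiff : μ (S \ T) = ENNReal.ofReal (t - t ^ 3 / 3) := by
      have hsub : S ∩ T ⊆ S := Set.inter_subset_left
      have := measure_diff (μ := μ) hsub (hSm.inter hTm).nullMeasurableSet
        (measure_ne_top μ _)
      rw [Set.diff_self_inter] at this
      rw [this, hμS, hμST, ← ENNReal.ofReal_sub _ (by positivity)]
    have hbound : ∀ᵐ x ∂(μ.restrict (S \ T)),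
        ENNReal.ofReal (1 / t ^ 4) ≤ ENNReal.ofReal ((1 / x.1 ^ 2 * ΔS2 x) ^ 2) := by
      filter_upwards [ae_restrict_of_ae hfe, ae_restrict_mem (hSm.diff hTm)] with x hx hxm
      obtain ⟨hxS, hxT⟩ := hxm
      have hxT' : ¬ x.2 = 1 := hxT
      rw [hx, if_neg hxT']
      apply ENNReal.ofReal_le_ofReal
      have h0 : 0 < x.1 := hxS.1
      have h4 : x.1 ^ 4 ≤ t ^ 4 := pow_le_pow_left₀ h0.le hxS.2 4
      exact one_div_le_one_div_of_le (by positivity) h4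
    calc ENNReal.ofReal (1 / t ^ 4 * (t - t ^ 3 / 3))
        = ENNReal.ofReal (1 / t ^ 4) * μ (S \ T) := by
          rw [hμdiff, ← ENNReal.ofReal_mul (by positivity)]
      _ = ∫⁻ _ in S \ T, ENNReal.ofReal (1 / t ^ 4) ∂μ := (setLIntegral_const _ _).symm
      _ ≤ ∫⁻ x in S \ T, ENNReal.ofReal ((1 / x.1 ^ 2 * ΔS2 x) ^ 2) ∂μ :=
          lintegral_mono_ae hbound
      _ ≤ ∫⁻ x, ENNReal.ofReal ((1 / x.1 ^ 2 * ΔS2 x) ^ 2) ∂μ :=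
          setLIntegral_le_lintegral _ _
  have part3 : ∫⁻ x, ENNReal.ofReal ((1 / x.1 ^ 2 * ΔS2 x) ^ 2) ∂μ = ⊤ := by
    rw [eq_top_iff, ← ENNReal.iSup_natCast]
    refine iSup_le fun n => ?_
    set t : ℝ := 1 / (n + 2 : ℝ) with htdef
    have hn2 : (0:ℝ) < (n + 2:ℝ) := by positivity
    have ht : 0 < t := by positivity
    have ht1 : t ≤ 1 := by
      rw [htdef, div_le_one hn2]; linarith [Nat.cast_nonneg (α := ℝ) n]
    refine le_trans ?_ (key3 t ht ht1)
    rw [← ENNReal.ofReal_natCast n]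
    apply ENNReal.ofReal_le_ofReal
    have heq : 1 / t ^ 4 * (t - t ^ 3 / 3) = (n + 2:ℝ) ^ 3 - (n + 2:ℝ) / 3 := by
      rw [htdef]; field_simp
    rw [heq]
    have hc : ((n:ℝ) + 2) ^ 3 ≥ 4 * ((n:ℝ) + 2) := by
      nlinarith [Nat.cast_nonneg (α := ℝ) n, sq_nonneg ((n:ℝ))]
    have hn0 : (0:ℝ) ≤ n := Nat.cast_nonneg n
    linarith
  ---- PART 4
  have part4 : ¬ MemLp (fun x => 1 / x.1 ^ 2 * ΔS2 x) 2 μ := by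
    intro hmem
    have hint : Integrable (fun x => (1 / x.1 ^ 2 * ΔS2 x) ^ 2) μ := by
      have := hmem.integrable_sq
      simpa [Pi.pow_apply] using this
    have := hint.lintegral_lt_top
    rw [part3] at this
    exact absurd this (by simp)
  ---- PART 2
  have part2 : ∀ᵐ x ∂μ, ∫⁻ y, ENNReal.ofReal ((1 / y.1 ^ 2 * ΔS2 y) ^ 2)
      ∂(condExpKernel μ sigmaU x) < ⊤ := by
    -- truncations
    set φ : ℕ → ℝ × ℝ → ℝ := fun n x => min ((1 / x.1 ^ 2 * ΔS2 x) ^ 2) n with hφdef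
    have hφm : ∀ n, Measurable (φ n) := fun n => hfm.min measurable_const
    have hφ0 : ∀ n x, 0 ≤ φ n x := fun n x => le_min (sq_nonneg _) (Nat.cast_nonneg n)
    have hφle : ∀ n x, φ n x ≤ n := fun n x => min_le_right _ _
    have hφint : ∀ n, Integrable (φ n) μ := by
      intro n
      refine ⟨(hφm n).aestronglyMeasurable, HasFiniteIntegral.of_bounded (C := n) ?_⟩
      filter_upwards with x
      rw [Real.norm_eq_abs, abs_of_nonneg (hφ0 n x)]; exact hφle n x
    -- the comparison functions
    set B : ℕ → ℝ × ℝ → ℝ :=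
      fun n x => min (1 / x.1 ^ 2) (n:ℝ) * (if x.2 = 1 then (1:ℝ) else 0) with hBdef
    set A : ℕ → ℝ × ℝ → ℝ :=
      fun n x => min (1 / x.1 ^ 4) (n:ℝ) * (1 - (if x.2 = 1 then (1:ℝ) else 0)) with hAdef
    have hg2 : ∀ n : ℕ, @Measurable (ℝ×ℝ) ℝ sigmaU _ (fun x => min (1 / x.1 ^ 2) n) :=
      fun n => ((measurable_const.div (measurable_id.pow_const 2)).min measurable_const).comp
        (Measurable.of_comap_le le_rfl)
    have hg4 : ∀ n : ℕ, @Measurable (ℝ×ℝ) ℝ sigmaU _ (fun x => min (1 / x.1 ^ 4) n) :=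
      fun n => ((measurable_const.div (measurable_id.pow_const 4)).min measurable_const).comp
        (Measurable.of_comap_le le_rfl)
    -- measurability / integrability of A, B
    have hBm : ∀ n, Measurable (B n) := fun n => ((hg2 n).mono hm le_rfl).mul hιm
    have hAm : ∀ n, Measurable (A n) := fun n =>
      ((hg4 n).mono hm le_rfl).mul (measurable_const.sub hιm)
    have hmin_nn2 : ∀ (n : ℕ) (u : ℝ), 0 ≤ min (1 / u ^ 2) (n:ℝ) :=
      fun n u => le_min (by positivity) (Nat.cast_nonneg n)
    have hmin_nn4 : ∀ (n : ℕ) (u : ℝ), 0 ≤ min (1 / u ^ 4) (n:ℝ) :=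
      fun n u => le_min (by positivity) (Nat.cast_nonneg n)
    have hmin_le : ∀ (k n : ℕ) (u : ℝ), min (1 / u ^ k) (n:ℝ) ≤ n :=
      fun k n u => min_le_right _ _
    have hι01 : ∀ x : ℝ × ℝ, (if x.2 = 1 then (1:ℝ) else 0) = 0 ∨
        (if x.2 = 1 then (1:ℝ) else 0) = 1 := by
      intro x; rcases eq_or_ne x.2 1 with h | h <;> simp [h]
    have hBint : ∀ n, Integrable (B n) μ := by
      intro n
      refine ⟨(hBm n).aestronglyMeasurable, HasFiniteIntegral.of_bounded (C := n) ?_⟩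
      filter_upwards with x
      simp only [Real.norm_eq_abs, hBdef]
      rcases hι01 x with h | h <;> rw [h]
      · simp [Nat.cast_nonneg]
      · rw [mul_one, abs_of_nonneg (hmin_nn2 n _)]; exact hmin_le 2 n _
    have hAint : ∀ n, Integrable (A n) μ := by
      intro n
      refine ⟨(hAm n).aestronglyMeasurable, HasFiniteIntegral.of_bounded (C := n) ?_⟩
      filter_upwards with x
      simp only [Real.norm_eq_abs, hAdef]
      rcases hι01 x with h | h <;> rw [h]
      · rw [sub_zero, mul_one, abs_of_nonneg (hmin_nn4 n _)]; exact hmin_le 4 n _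
      · simp [Nat.cast_nonneg]
    -- conditional expectations of A and B
    have hBce : ∀ n, μ[B n|sigmaU] =ᵐ[μ] fun x => min (1 / x.1 ^ 2) (n:ℝ) * x.1 ^ 2 := by
      intro n
      have h := condExp_mul_of_stronglyMeasurable_left (μ := μ) (m := sigmaU)
        (hg2 n).stronglyMeasurable (hBint n) hιint
      refine h.trans ?_
      filter_upwards [hcond] with x hx
      simp only [Pi.mul_apply]; rw [hx]
    have hAce : ∀ n, μ[A n|sigmaU] =ᵐ[μ] fun x => min (1 / x.1 ^ 4) (n:ℝ) * (1 - x.1 ^ 2) := by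
      intro n
      have hιint' : Integrable (fun x : ℝ × ℝ => 1 - (if x.2 = 1 then (1:ℝ) else 0)) μ :=
        (integrable_const 1).sub hιint
      have h := condExp_mul_of_stronglyMeasurable_left (μ := μ) (m := sigmaU)
        (hg4 n).stronglyMeasurable (hAint n) hιint'
      refine h.trans ?_
      have hsub : μ[(fun x : ℝ × ℝ => 1 - (if x.2 = 1 then (1:ℝ) else 0))|sigmaU]
          =ᵐ[μ] fun x => 1 - x.1 ^ 2 := by
        have h2 := condExp_sub (m := sigmaU) (μ := μ)
          (integrable_const (1:ℝ)) hιint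
        refine h2.trans ?_
        filter_upwards [hcond] with x hx
        simp only [Pi.sub_apply]
        rw [hx, condExp_const hm (1:ℝ)]
      filter_upwards [hsub] with x hx
      simp only [Pi.mul_apply]; rw [hx]
    -- φ n = A n + B n a.e.
    have hφeq : ∀ n, φ n =ᵐ[μ] A n + B n := by
      intro n
      filter_upwards [hfe] with y hy
      simp only [hφdef, hAdef, hBdef, Pi.add_apply]
      rcases eq_or_ne y.2 1 with h | h
      · rw [hy, if_pos h, if_pos h]; simp
      · rw [hy, if_neg h, if_neg h]; simp
    -- bound on the conditional expectation of φ n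
    have hub : ∀ n : ℕ, ∀ᵐ x ∂μ,
        (μ[φ n|sigmaU]) x ≤ 1 + 1 / x.1 ^ 4 * (1 - x.1 ^ 2) := by
      intro n
      have h0 := condExp_congr_ae (m := sigmaU) (hφeq n)
      filter_upwards [h0, condExp_add (m := sigmaU) (hAint n) (hBint n),
        hAce n, hBce n, hIcc, hne] with x h1 h2 h3 h4 hx1 hx0
      rw [h1, h2, Pi.add_apply, h3, h4]
      have hx2 : (0:ℝ) ≤ 1 - x.1 ^ 2 := by
        have := hx1.2; have := hx1.1; nlinarith
      have hA' : min (1 / x.1 ^ 4) (n:ℝ) * (1 - x.1 ^ 2) ≤ 1 / x.1 ^ 4 * (1 - x.1 ^ 2) :=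
        mul_le_mul_of_nonneg_right (min_le_left _ _) hx2
      have hB' : min (1 / x.1 ^ 2) (n:ℝ) * x.1 ^ 2 ≤ 1 := by
        have h5 : min (1 / x.1 ^ 2) (n:ℝ) * x.1 ^ 2 ≤ 1 / x.1 ^ 2 * x.1 ^ 2 :=
          mul_le_mul_of_nonneg_right (min_le_left _ _) (sq_nonneg _)
        have h6 : 1 / x.1 ^ 2 * x.1 ^ 2 = 1 := by field_simp
        linarith
      linarith
    -- kernel representation
    have hker : ∀ n : ℕ,
        μ[φ n|sigmaU] =ᵐ[μ] fun x => ∫ y, φ n y ∂(condExpKernel μ sigmaU x) :=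
      fun n => condExp_ae_eq_integral_condExpKernel hm (hφint n)
    have hker' : ∀ n : ℕ, ∀ᵐ x ∂μ,
        (μ[φ n|sigmaU]) x = ∫ y, φ n y ∂(condExpKernel μ sigmaU x) := hker
    have hsup : ∀ y : ℝ × ℝ, (⨆ n : ℕ, ENNReal.ofReal (φ n y))
        = ENNReal.ofReal ((1 / y.1 ^ 2 * ΔS2 y) ^ 2) := by
      intro y
      refine le_antisymm (iSup_le fun n => ENNReal.ofReal_le_ofReal (min_le_left _ _)) ?_
      have h := le_iSup (fun n : ℕ => ENNReal.ofReal (φ n y)) ⌈(1 / y.1 ^ 2 * ΔS2 y) ^ 2⌉₊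
      simp only [hφdef] at h ⊢
      rwa [min_eq_left (Nat.le_ceil _)] at h
    have hmono : Monotone (fun n : ℕ => fun y : ℝ × ℝ => ENNReal.ofReal (φ n y)) := by
      intro n m hnm
      intro y
      exact ENNReal.ofReal_le_ofReal (min_le_min le_rfl (by exact_mod_cast hnm))
    filter_upwards [ae_all_iff.2 hker', ae_all_iff.2 hub] with x hkx hux
    have hint_k : ∀ n, Integrable (φ n) (condExpKernel μ sigmaU x) := by
      intro n
      refine ⟨(hφm n).aestronglyMeasurable, HasFiniteIntegral.of_bounded (C := n) ?_⟩
      filter_upwards with y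
      rw [Real.norm_eq_abs, abs_of_nonneg (hφ0 n y)]; exact hφle n y
    calc ∫⁻ y, ENNReal.ofReal ((1 / y.1 ^ 2 * ΔS2 y) ^ 2) ∂(condExpKernel μ sigmaU x)
        = ∫⁻ y, ⨆ n : ℕ, ENNReal.ofReal (φ n y) ∂(condExpKernel μ sigmaU x) :=
          lintegral_congr fun y => (hsup y).symm
      _ = ⨆ n : ℕ, ∫⁻ y, ENNReal.ofReal (φ n y) ∂(condExpKernel μ sigmaU x) :=
          lintegral_iSup (fun n => (hφm n).ennreal_ofReal) hmono
      _ ≤ ENNReal.ofReal (1 + 1 / x.1 ^ 4 * (1 - x.1 ^ 2)) := by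
          refine iSup_le fun n => ?_
          rw [← ofReal_integral_eq_lintegral_ofReal (hint_k n) (ae_of_all _ (hφ0 n))]
          apply ENNReal.ofReal_le_ofReal
          rw [← hkx n]
          exact hux n
      _ < ⊤ := ENNReal.ofReal_lt_top
  exact ⟨memLp_const _, part2, part3, part4⟩
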